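/- The weak order on S_n is self-dual: the map f sending π to the permutation whose inversion set is inv(w_0) \ inv(π) (where w_0 is the longest element) is an involutive order-reversing automorphism, and it satisfies π ∧ f(π) = e and π ∨ f(π) = w_0 for all π. -/

import Mathlib

/-- The inversion set of a permutation of `Fin n`. -/
def invSet {n : ℕ} (π : Equiv.Perm (Fin n)) : Set (Fin n × Fin n) :=
  {p | p.1 < p.2 ∧ π.symm p.2 < π.symm p.1}

lemma invSet_revPerm (n : ℕ) :
    invSet (Fin.revPerm : Equiv.Perm (Fin n)) = {p | p.1 < p.2} := by
  ext p
  simp only [invSet, Set.mem_setOf_eq, Fin.revPerm_symm, Fin.revPerm_apply, Fin.rev_lt_rev,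
    and_self_iff, and_iff_left_iff_imp]

lemma mul_rev_symm_apply {n : ℕ} (π : Equiv.Perm (Fin n)) (x : Fin n) :
    (π * Fin.revPerm).symm x = (π.symm x).rev := by
  simp [Equiv.Perm.mul_def]

lemma invSet_mul_rev {n : ℕ} (π : Equiv.Perm (Fin n)) :
    invSet (π * Fin.revPerm) = invSet (Fin.revPerm : Equiv.Perm (Fin n)) \ invSet π := by
  ext ⟨i, j⟩
  rw [invSet_revPerm]
  constructor
  · rintro ⟨hij, h⟩
    rw [mul_rev_symm_apply, mul_rev_symm_apply, Fin.rev_lt_rev] at h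
    exact ⟨hij, fun hc => absurd hc.2 (not_lt.2 h.le)⟩
  · rintro ⟨hij, h⟩
    have hle : π.symm i ≤ π.symm j := not_lt.1 (fun hc => h ⟨hij, hc⟩)
    have hne : π.symm i ≠ π.symm j := fun e => hij.ne (π.symm.injective e)
    refine ⟨hij, ?_⟩
    rw [mul_rev_symm_apply, mul_rev_symm_apply, Fin.rev_lt_rev]
    exact lt_of_le_of_ne hle hne

lemma eq_one_of_invSet_empty {n : ℕ} (τ : Equiv.Perm (Fin n)) (h : invSet τ = ∅) : τ = 1 := by
  have sm : StrictMono τ.symm := by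
    intro i j hij
    have hne : τ.symm i ≠ τ.symm j := fun hc => hij.ne (τ.symm.injective hc)
    have hnl : ¬ τ.symm j < τ.symm i := fun hc =>
      Set.eq_empty_iff_forall_notMem.1 h (i, j) ⟨hij, hc⟩
    exact lt_of_le_of_ne (not_lt.1 hnl) hne
  have hy : ∀ y, τ.symm y = y := by
    intro y
    have he := Subsingleton.elim
      (StrictMono.orderIsoOfSurjective (⇑τ.symm) sm τ.symm.surjective) (OrderIso.refl (Fin n))
    have h1 := congrArg (fun o : Fin n ≃o Fin n => o y) he
    simpa [StrictMono.coe_orderIsoOfSurjective] using h1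
  have hs : τ.symm = 1 := Equiv.ext fun y => hy y
  exact Equiv.ext fun y => by simpa using congrArg τ (hy y).symm

theorem weak_order_self_dual (n : ℕ) :
    ∃ f : Equiv.Perm (Fin n) → Equiv.Perm (Fin n),
      (∀ π, invSet (f π) = invSet (Fin.revPerm : Equiv.Perm (Fin n)) \ invSet π) ∧
      (∀ π, f (f π) = π) ∧
      (∀ π σ, invSet π ⊆ invSet σ ↔ invSet (f σ) ⊆ invSet (f π)) ∧
      (∀ π τ, invSet τ ⊆ invSet π → invSet τ ⊆ invSet (f π) → τ = 1) ∧
      (∀ π τ, invSet π ⊆ invSet τ → invSet (f π) ⊆ invSet τ →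
        τ = (Fin.revPerm : Equiv.Perm (Fin n))) := by
  have hsubW : ∀ π : Equiv.Perm (Fin n),
      invSet π ⊆ invSet (Fin.revPerm : Equiv.Perm (Fin n)) := by
    intro π
    rw [invSet_revPerm]
    exact fun p hp => hp.1
  refine ⟨fun π => π * Fin.revPerm, invSet_mul_rev, ?_, ?_, ?_, ?_⟩
  · intro π
    ext x
    simp
  · intro π σ
    rw [invSet_mul_rev, invSet_mul_rev]
    constructor
    · intro h p hp
      exact ⟨hp.1, fun hc => hp.2 (h hc)⟩
    · intro h p hp
      by_contra hc
      exact (h ⟨hsubW π hp, hc⟩).2 hp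
  · intro π τ h1 h2
    apply eq_one_of_invSet_empty
    rw [invSet_mul_rev] at h2
    ext p
    simp only [Set.mem_empty_iff_false, iff_false]
    exact fun hp => (h2 hp).2 (h1 hp)
  · intro π τ h1 h2
    rw [invSet_mul_rev] at h2
    have hfull : ∀ p : Fin n × Fin n, p.1 < p.2 → p ∈ invSet τ := by
      intro p hp
      by_cases hπ : p ∈ invSet π
      · exact h1 hπ
      · exact h2 ⟨by rwa [invSet_revPerm], hπ⟩
    have hτ : invSet (τ * Fin.revPerm) = ∅ := by
      rw [invSet_mul_rev, invSet_revPerm]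
      ext p
      simp only [Set.mem_diff, Set.mem_empty_iff_false, iff_false, Set.mem_setOf_eq, not_and,
        not_not]
      exact fun hp => hfull p hp
    have h1' := eq_one_of_invSet_empty _ hτ
    calc τ = τ * Fin.revPerm * Fin.revPerm := by ext x; simp
      _ = Fin.revPerm := by rw [h1', one_mul]
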